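/- For |q| < 1 and a complex with a ≠ 0, and any nonnegative integer n: the sum over pairs (j,k) of nonnegative integers with j + k = n of (a;q)_j (a;q)_k (-1)^k / ((q;q)_j (q;q)_k) equals 0 if n is odd, and equals (a^2; q^2)_m / (q^2; q^2)_m if n = 2m. -/

import Mathlib

open Finset Filter

noncomputable def qp (q x : ℂ) (k : ℕ) : ℂ := ∏ j ∈ Finset.range k, (1 - x * q ^ j)

noncomputable def qpInf (q x : ℂ) : ℂ := ∏' j : ℕ, (1 - x * q ^ j)

noncomputable def qpz (q x : ℂ) (n : ℤ) : ℂ := qpInf q x / qpInf q (x * q ^ n)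

noncomputable def zeta (r : ℕ) : ℂ := Complex.exp (2 * Real.pi * Complex.I / r)

/-! ### Auxiliary machinery -/

noncomputable def cc (q a : ℂ) (j : ℕ) : ℂ := qp q a j / qp q q j

noncomputable def gg (q a : ℂ) (k : ℕ) : ℂ := (-1 : ℂ) ^ k * cc q a k

/-- shift: `shf h 0 = 0`, `shf h (j+1) = h j`. -/
noncomputable def shf (h : ℕ → ℂ) : ℕ → ℂ
  | 0 => 0
  | j + 1 => h j

noncomputable def Sq (q a : ℂ) (n : ℕ) : ℂ :=
  ∑ p ∈ Finset.HasAntidiagonal.antidiagonal n, cc q a p.1 * gg q a p.2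

lemma one_sub_ne {z : ℂ} (h : ‖z‖ < 1) : (1 : ℂ) - z ≠ 0 := by
  intro h0
  have : z = 1 := by linear_combination -h0
  rw [this] at h; simp at h

lemma qp_succ (q x : ℂ) (k : ℕ) : qp q x (k + 1) = qp q x k * (1 - x * q ^ k) :=
  Finset.prod_range_succ _ _

lemma norm_term_lt {q : ℂ} (hq : ‖q‖ < 1) (j : ℕ) : ‖q * q ^ j‖ < 1 := by
  rcases eq_or_ne q 0 with h | h
  · simp [h]
  · calc ‖q * q ^ j‖ = ‖q‖ * ‖q‖ ^ j := by rw [norm_mul, norm_pow]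
    _ ≤ ‖q‖ * 1 := by
        have : ‖q‖ ^ j ≤ 1 := pow_le_one₀ (norm_nonneg q) hq.le
        nlinarith [norm_nonneg q]
    _ < 1 := by simpa using hq

lemma qp_qq_ne {q : ℂ} (hq : ‖q‖ < 1) (k : ℕ) : qp q q k ≠ 0 := by
  unfold qp
  rw [Finset.prod_ne_zero_iff]
  exact fun j _ => one_sub_ne (norm_term_lt hq j)

lemma cc_rec {q : ℂ} (hq : ‖q‖ < 1) (a : ℂ) (j : ℕ) :
    (1 - q * q ^ j) * cc q a (j + 1) = (1 - a * q ^ j) * cc q a j := by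
  unfold cc
  rw [qp_succ q a j, qp_succ q q j]
  have h1 : qp q q j ≠ 0 := qp_qq_ne hq j
  have h2 : (1 : ℂ) - q * q ^ j ≠ 0 := one_sub_ne (norm_term_lt hq j)
  field_simp

lemma cc_zero (q a : ℂ) : cc q a 0 = 1 := by simp [cc, qp]

lemma claimU {q : ℂ} (hq : ‖q‖ < 1) (a : ℂ) (j : ℕ) :
    cc q a j - 1 * shf (cc q a) j
      = (fun i => q ^ i * cc q a i) j - a * shf (fun i => q ^ i * cc q a i) j := by
  cases j with
  | zero => simp [shf, cc_zero]
  | succ j =>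
      simp only [shf, one_mul]
      have h := cc_rec hq a j
      linear_combination h

lemma claimV {q : ℂ} (hq : ‖q‖ < 1) (a : ℂ) (j : ℕ) :
    gg q a j + 1 * shf (gg q a) j
      = (fun i => q ^ i * gg q a i) j + a * shf (fun i => q ^ i * gg q a i) j := by
  cases j with
  | zero => simp [shf, gg, cc_zero]
  | succ j =>
      simp only [shf, gg, one_mul]
      have h := cc_rec hq a j
      linear_combination ((-1 : ℂ)) ^ (j + 1) * h

lemma shiftR (f g : ℕ → ℂ) (n : ℕ) :
    ∑ p ∈ Finset.HasAntidiagonal.antidiagonal (n + 1), f p.1 * shf g p.2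
      = ∑ p ∈ Finset.HasAntidiagonal.antidiagonal n, f p.1 * g p.2 := by
  rw [Finset.Nat.sum_antidiagonal_succ']
  simp [shf]

lemma shiftL (f g : ℕ → ℂ) (n : ℕ) :
    ∑ p ∈ Finset.HasAntidiagonal.antidiagonal (n + 1), shf f p.1 * g p.2
      = ∑ p ∈ Finset.HasAntidiagonal.antidiagonal n, f p.1 * g p.2 := by
  rw [Finset.Nat.sum_antidiagonal_succ]
  simp [shf]

lemma conv_eval (f g : ℕ → ℂ) (t : ℂ) (n : ℕ) :
    ∑ p ∈ Finset.HasAntidiagonal.antidiagonal (n + 2), (f p.1 - t * shf f p.1) * (g p.2 + t * shf g p.2)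
      = (∑ p ∈ Finset.HasAntidiagonal.antidiagonal (n + 2), f p.1 * g p.2)
        - t ^ 2 * ∑ p ∈ Finset.HasAntidiagonal.antidiagonal n, f p.1 * g p.2 := by
  have hterm : ∀ p : ℕ × ℕ,
      (f p.1 - t * shf f p.1) * (g p.2 + t * shf g p.2)
        = f p.1 * g p.2 + t * (f p.1 * shf g p.2)
          - (t * (shf f p.1 * g p.2) + t ^ 2 * (shf f p.1 * shf g p.2)) := by
    intro p; ring
  simp_rw [hterm]
  rw [Finset.sum_sub_distrib, Finset.sum_add_distrib, Finset.sum_add_distrib,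
    ← Finset.mul_sum, ← Finset.mul_sum, ← Finset.mul_sum]
  rw [shiftR f g (n + 1), shiftL f (shf g) (n + 1), shiftR f g n, shiftL f g (n + 1)]
  ring

lemma fq_conv (q : ℂ) (f g : ℕ → ℂ) (N : ℕ) :
    ∑ p ∈ Finset.HasAntidiagonal.antidiagonal N, (q ^ p.1 * f p.1) * (q ^ p.2 * g p.2)
      = q ^ N * ∑ p ∈ Finset.HasAntidiagonal.antidiagonal N, f p.1 * g p.2 := by
  rw [Finset.mul_sum]
  apply Finset.sum_congr rfl
  intro p hp
  have h := Finset.HasAntidiagonal.mem_antidiagonal.mp hp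
  rw [← h, pow_add]
  ring

lemma Srec {q : ℂ} (hq : ‖q‖ < 1) (a : ℂ) (n : ℕ) :
    (1 - q ^ (n + 2)) * Sq q a (n + 2) = (1 - a ^ 2 * q ^ n) * Sq q a n := by
  have key :
      ∑ p ∈ Finset.HasAntidiagonal.antidiagonal (n + 2),
          (cc q a p.1 - 1 * shf (cc q a) p.1) * (gg q a p.2 + 1 * shf (gg q a) p.2)
        = ∑ p ∈ Finset.HasAntidiagonal.antidiagonal (n + 2),
            ((fun i => q ^ i * cc q a i) p.1 - a * shf (fun i => q ^ i * cc q a i) p.1) *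
              ((fun i => q ^ i * gg q a i) p.2 + a * shf (fun i => q ^ i * gg q a i) p.2) :=
    Finset.sum_congr rfl fun p _ => by rw [claimU hq a p.1, claimV hq a p.2]
  have hA := conv_eval (cc q a) (gg q a) 1 n
  have hB := conv_eval (fun i => q ^ i * cc q a i) (fun i => q ^ i * gg q a i) a n
  beta_reduce at hB
  rw [hA, hB] at key
  rw [fq_conv q (cc q a) (gg q a) (n + 2), fq_conv q (cc q a) (gg q a) n] at key
  have hS2 : (∑ p ∈ Finset.HasAntidiagonal.antidiagonal (n + 2), cc q a p.1 * gg q a p.2) = Sq q a (n + 2) := rfl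
  have hS0 : (∑ p ∈ Finset.HasAntidiagonal.antidiagonal n, cc q a p.1 * gg q a p.2) = Sq q a n := rfl
  rw [hS2, hS0] at key
  linear_combination key

noncomputable def RR (q a : ℂ) (n : ℕ) : ℂ :=
  if 2 ∣ n then qp (q ^ 2) (a ^ 2) (n / 2) / qp (q ^ 2) (q ^ 2) (n / 2) else 0

lemma hq2 {q : ℂ} (hq : ‖q‖ < 1) : ‖q ^ 2‖ < 1 := by
  rw [norm_pow]
  nlinarith [norm_nonneg q]

lemma step {q : ℂ} (hq : ‖q‖ < 1) (a : ℂ) (n : ℕ) (ih : Sq q a n = RR q a n) :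
    Sq q a (n + 2) = RR q a (n + 2) := by
  have hne : (1 : ℂ) - q ^ (n + 2) ≠ 0 := by
    apply one_sub_ne
    calc ‖q ^ (n + 2)‖ = ‖q * q ^ (n + 1)‖ := by rw [← pow_succ']
    _ < 1 := norm_term_lt hq (n + 1)
  have hrec := Srec hq a n
  rw [ih] at hrec
  by_cases hdvd : 2 ∣ n
  · obtain ⟨t, ht⟩ := hdvd
    have hd2 : 2 ∣ n + 2 := ⟨t + 1, by omega⟩
    have hdiv : (n + 2) / 2 = t + 1 := by omega
    have hdiv' : n / 2 = t := by omega
    have hqn : ((q ^ 2) ^ t) = q ^ n := by rw [← pow_mul, ht]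
    have hqn2 : (q ^ 2) * (q ^ 2) ^ t = q ^ (n + 2) := by
      rw [← pow_succ', ← pow_mul]; congr 1; omega
    have hqpne : qp (q ^ 2) (q ^ 2) t ≠ 0 := qp_qq_ne (hq2 hq) t
    rw [RR, if_pos ⟨t, ht⟩, hdiv'] at hrec
    rw [RR, if_pos hd2, hdiv, qp_succ, qp_succ, hqn2, hqn]
    have : Sq q a (n + 2) =
        (1 - a ^ 2 * q ^ n) * (qp (q ^ 2) (a ^ 2) t / qp (q ^ 2) (q ^ 2) t) / (1 - q ^ (n + 2)) := by
      field_simp at hrec ⊢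
      linear_combination hrec
    rw [this]
    have hne2 : (1 : ℂ) - q ^ (n + 2) ≠ 0 := hne
    field_simp
  · have hd2 : ¬ 2 ∣ n + 2 := fun ⟨t, ht⟩ => hdvd ⟨t - 1, by omega⟩
    rw [RR, if_neg hdvd] at hrec
    rw [RR, if_neg hd2]
    have h0 : (1 - q ^ (n + 2)) * Sq q a (n + 2) = (1 - q ^ (n + 2)) * 0 := by
      rw [mul_zero]; linear_combination hrec
    exact mul_left_cancel₀ hne h0

lemma Sq_eq_RR {q : ℂ} (hq : ‖q‖ < 1) (a : ℂ) (n : ℕ) : Sq q a n = RR q a n := by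
  suffices h : ∀ m, Sq q a m = RR q a m ∧ Sq q a (m + 1) = RR q a (m + 1) from (h n).1
  intro m
  induction m with
  | zero =>
      constructor
      · simp [Sq, RR, gg, cc_zero, qp]
      · have h1 : Sq q a 1 = 0 := by
          rw [Sq, show (1 : ℕ) = 0 + 1 from rfl, Finset.Nat.sum_antidiagonal_succ]
          simp [gg, cc_zero]
        have h2 : RR q a 1 = 0 := by norm_num [RR]
        rw [h1, h2]
  | succ m ih => exact ⟨ih.2, step hq a m ih.1⟩

theorem stmt3 (q a : ℂ) (hq : ‖q‖ < 1) (ha : a ≠ 0) (n : ℕ) :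
    ∑ p ∈ Finset.HasAntidiagonal.antidiagonal n,
        qp q a p.1 * qp q a p.2 * (-1 : ℂ) ^ p.2 / (qp q q p.1 * qp q q p.2)
      = if 2 ∣ n then qp (q ^ 2) (a ^ 2) (n / 2) / qp (q ^ 2) (q ^ 2) (n / 2) else 0 := by
  have hsum : ∑ p ∈ Finset.HasAntidiagonal.antidiagonal n,
      qp q a p.1 * qp q a p.2 * (-1 : ℂ) ^ p.2 / (qp q q p.1 * qp q q p.2) = Sq q a n := by
    apply Finset.sum_congr rfl
    intro p _
    rw [cc, gg, cc]
    have h1 := qp_qq_ne hq p.1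
    have h2 := qp_qq_ne hq p.2
    field_simp
  rw [hsum, Sq_eq_RR hq a n, RR]
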